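/- Let m ≥ 1, let p = (p_i) and q = (q_i) be probability vectors on {1,…,m} with strictly positive components, and set r := ∑_{i=1}^m p_i²/q_i. Let B_1,…,B_m : ℝⁿ → ℝⁿ each be L-Lipschitz, and define A_i := (p_i/q_i) B_i for each i. Let y, x* ∈ ℝⁿ and φ_1,…,φ_m ∈ ℝⁿ, and define G_i := A_i(y) − φ_i + ∑_{j=1}^m q_j φ_j for each i and B̄(y) := ∑_{i=1}^m p_i B_i(y). Then ∑_{i=1}^m q_i ‖G_i − B̄(y)‖₂² ≤ 2 ( r L² ‖y − x*‖₂² + ∑_{i=1}^m q_i ‖φ_i − A_i(x*)‖₂² ). -/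

import Mathlib

open Finset in
lemma var_le_aux {E : Type*} [NormedAddCommGroup E] [InnerProductSpace ℝ E] {m : ℕ}
    (q : Fin m → ℝ) (hq : ∀ i, 0 ≤ q i) (hqs : ∑ i, q i = 1)
    (v : Fin m → E) :
    ∑ i, q i * ‖v i - ∑ j, q j • v j‖ ^ 2 ≤ ∑ i, q i * ‖v i‖ ^ 2 := by
  set Ev : E := ∑ j, q j • v j with hEv
  have h2 : ∑ i, q i * (inner ℝ (v i) Ev : ℝ) = ‖Ev‖ ^ 2 := by
    rw [← real_inner_self_eq_norm_sq]
    nth_rewrite 2 [hEv]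
    rw [sum_inner]
    exact Finset.sum_congr rfl fun i _ => (real_inner_smul_left _ _ _).symm
  have h1 : ∀ i, ‖v i - Ev‖ ^ 2 = ‖v i‖ ^ 2 - 2 * inner ℝ (v i) Ev + ‖Ev‖ ^ 2 :=
    fun i => norm_sub_sq_real _ _
  have key : ∑ i, q i * ‖v i - Ev‖ ^ 2
      = ∑ i, q i * ‖v i‖ ^ 2 - ‖Ev‖ ^ 2 := by
    have e : ∀ i ∈ Finset.univ, q i * ‖v i - Ev‖ ^ 2
        = q i * ‖v i‖ ^ 2 - q i * (2 * (inner ℝ (v i) Ev : ℝ)) + q i * ‖Ev‖ ^ 2 :=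
      fun i _ => by rw [h1 i]; ring
    rw [Finset.sum_congr rfl e, Finset.sum_add_distrib, Finset.sum_sub_distrib,
      ← Finset.sum_mul, hqs, one_mul]
    have h3 : ∑ i, q i * (2 * (inner ℝ (v i) Ev : ℝ)) = 2 * ‖Ev‖ ^ 2 := by
      rw [← h2, Finset.mul_sum]
      exact Finset.sum_congr rfl fun i _ => by ring
    rw [h3]; ring
  rw [key]
  nlinarith [sq_nonneg ‖Ev‖]

theorem stmt_7 {n m : ℕ} (hm : 0 < m)
    (p q : Fin m → ℝ)
    (hp : ∀ i, 0 < p i) (hq : ∀ i, 0 < q i)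
    (hps : ∑ i, p i = 1) (hqs : ∑ i, q i = 1)
    (r : ℝ) (hr : r = ∑ i, (p i) ^ 2 / q i)
    (B : Fin m → EuclideanSpace ℝ (Fin n) → EuclideanSpace ℝ (Fin n))
    (L : ℝ)
    (hLip : ∀ i x y, ‖B i x - B i y‖ ≤ L * ‖x - y‖)
    (A : Fin m → EuclideanSpace ℝ (Fin n) → EuclideanSpace ℝ (Fin n))
    (hA : ∀ i x, A i x = (p i / q i) • B i x)
    (y xstar : EuclideanSpace ℝ (Fin n))
    (φ : Fin m → EuclideanSpace ℝ (Fin n))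
    (G : Fin m → EuclideanSpace ℝ (Fin n))
    (hG : ∀ i, G i = A i y - φ i + ∑ j, q j • φ j)
    (Bbar : EuclideanSpace ℝ (Fin n)) (hB : Bbar = ∑ i, p i • B i y) :
    ∑ i, q i * ‖G i - Bbar‖ ^ 2
      ≤ 2 * (r * L ^ 2 * ‖y - xstar‖ ^ 2 + ∑ i, q i * ‖φ i - A i xstar‖ ^ 2) := by
  set s : Fin m → EuclideanSpace ℝ (Fin n) := fun i => A i y - A i xstar with hs
  set t : Fin m → EuclideanSpace ℝ (Fin n) := fun i => A i xstar - φ i with ht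
  set Es : EuclideanSpace ℝ (Fin n) := ∑ j, q j • s j with hEs
  set Et : EuclideanSpace ℝ (Fin n) := ∑ j, q j • t j with hEt
  -- Bbar = ∑ q j • A j y
  have hBbar : Bbar = ∑ j, q j • A j y := by
    rw [hB]
    refine Finset.sum_congr rfl fun j _ => ?_
    rw [hA, smul_smul, mul_comm, div_mul_cancel₀ _ (hq j).ne']
  -- decomposition
  have hdecomp : ∀ i, G i - Bbar = (s i - Es) + (t i - Et) := by
    intro i
    have hEs' : Es = Bbar - ∑ j, q j • A j xstar := by
      rw [hEs, hBbar, ← Finset.sum_sub_distrib]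
      exact Finset.sum_congr rfl fun j _ => (smul_sub _ _ _)
    have hEt' : Et = (∑ j, q j • A j xstar) - ∑ j, q j • φ j := by
      rw [hEt, ← Finset.sum_sub_distrib]
      exact Finset.sum_congr rfl fun j _ => (smul_sub _ _ _)
    rw [hG i, hEs', hEt', hs, ht]
    simp only
    abel
  -- pointwise bound
  have hpt : ∀ i, ‖G i - Bbar‖ ^ 2 ≤ 2 * ‖s i - Es‖ ^ 2 + 2 * ‖t i - Et‖ ^ 2 := by
    intro i
    rw [hdecomp i]
    have h := norm_add_le (s i - Es) (t i - Et)
    have h2 := pow_le_pow_left₀ (norm_nonneg _) h 2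
    nlinarith [h2, sq_nonneg (‖s i - Es‖ - ‖t i - Et‖)]
  have hqnn : ∀ i, (0:ℝ) ≤ q i := fun i => (hq i).le
  have hsum1 : ∑ i, q i * ‖s i - Es‖ ^ 2 ≤ ∑ i, q i * ‖s i‖ ^ 2 :=
    var_le_aux q hqnn hqs s
  have hsum2 : ∑ i, q i * ‖t i - Et‖ ^ 2 ≤ ∑ i, q i * ‖t i‖ ^ 2 :=
    var_le_aux q hqnn hqs t
  -- bound on ∑ q i ‖s i‖²
  have hsbound : ∑ i, q i * ‖s i‖ ^ 2 ≤ r * L ^ 2 * ‖y - xstar‖ ^ 2 := by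
    rw [hr, Finset.sum_mul, Finset.sum_mul]
    refine Finset.sum_le_sum fun i _ => ?_
    have hnorm : ‖s i‖ = (p i / q i) * ‖B i y - B i xstar‖ := by
      rw [hs]
      simp only
      rw [hA, hA, ← smul_sub, norm_smul, Real.norm_eq_abs,
        abs_of_pos (div_pos (hp i) (hq i))]
    have hb : ‖B i y - B i xstar‖ ≤ L * ‖y - xstar‖ := hLip i y xstar
    have hsq : ‖s i‖ ^ 2 ≤ (p i / q i) ^ 2 * (L ^ 2 * ‖y - xstar‖ ^ 2) := by
      rw [hnorm, mul_pow]
      have : ‖B i y - B i xstar‖ ^ 2 ≤ L ^ 2 * ‖y - xstar‖ ^ 2 := by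
        have := pow_le_pow_left₀ (norm_nonneg _) hb 2
        calc ‖B i y - B i xstar‖ ^ 2 ≤ (L * ‖y - xstar‖) ^ 2 := this
          _ = L ^ 2 * ‖y - xstar‖ ^ 2 := by ring
      nlinarith [sq_nonneg (p i / q i)]
    calc q i * ‖s i‖ ^ 2 ≤ q i * ((p i / q i) ^ 2 * (L ^ 2 * ‖y - xstar‖ ^ 2)) :=
          mul_le_mul_of_nonneg_left hsq (hqnn i)
      _ = p i ^ 2 / q i * (L ^ 2) * ‖y - xstar‖ ^ 2 := by
          have hqne : q i ≠ 0 := (hq i).ne'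
          field_simp
  -- bound on ∑ q i ‖t i‖²
  have htbound : ∑ i, q i * ‖t i‖ ^ 2 = ∑ i, q i * ‖φ i - A i xstar‖ ^ 2 := by
    refine Finset.sum_congr rfl fun i _ => ?_
    rw [ht]
    simp only
    rw [← norm_neg (A i xstar - φ i), neg_sub]
  calc ∑ i, q i * ‖G i - Bbar‖ ^ 2
      ≤ ∑ i, q i * (2 * ‖s i - Es‖ ^ 2 + 2 * ‖t i - Et‖ ^ 2) :=
        Finset.sum_le_sum fun i _ => mul_le_mul_of_nonneg_left (hpt i) (hqnn i)
    _ = 2 * (∑ i, q i * ‖s i - Es‖ ^ 2) + 2 * (∑ i, q i * ‖t i - Et‖ ^ 2) := by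
        rw [Finset.mul_sum, Finset.mul_sum, ← Finset.sum_add_distrib]
        exact Finset.sum_congr rfl fun i _ => by ring
    _ ≤ 2 * (∑ i, q i * ‖s i‖ ^ 2) + 2 * (∑ i, q i * ‖t i‖ ^ 2) := by
        linarith
    _ ≤ 2 * (r * L ^ 2 * ‖y - xstar‖ ^ 2 + ∑ i, q i * ‖φ i - A i xstar‖ ^ 2) := by
        rw [htbound] at *; linarith
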